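/- Let A and B be groups with non-trivial elements a ∈ A and b ∈ B such that a does not have order 2 or b does not have order 2. Then for any x ∈ A * B not lying in the cyclic subgroup ⟨ab⟩, one has ⟨ab⟩ ∩ x⟨ab⟩x⁻¹ = {e}. In particular ⟨ab⟩ is conjugate separated in A * B. -/

import Mathlib

open Monoid CoprodI

set_option linter.unusedSectionVars false

namespace ZpowersAux

variable {ι : Type*} [DecidableEq ι] {M : ι → Type*} [∀ i, Group (M i)] [∀ i, DecidableEq (M i)]

/-- predicate: `l` is a reduced word -/
def Red (l : List (Σ i, M i)) : Prop :=
  (∀ p ∈ l, p.2 ≠ (1 : M p.1)) ∧ l.Chain' (fun p q => p.1 ≠ q.1)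

/-- product of a list of letters -/
def P (l : List (Σ i, M i)) : CoprodI M :=
  (l.map fun p => of p.2).prod

@[simp] theorem P_nil : P ([] : List (Σ i, M i)) = 1 := rfl

@[simp] theorem P_cons (p : (Σ i, M i)) (l : List (Σ i, M i)) :
    P (p :: l) = of p.2 * P l := by simp [P]

@[simp] theorem P_append (l₁ l₂ : List (Σ i, M i)) : P (l₁ ++ l₂) = P l₁ * P l₂ := by
  simp [P]

/-- bundle a reduced list into a `Word` -/
def toWord (l : List (Σ i, M i)) (h : Red l) : Word M :=
  ⟨l, h.1, h.2⟩

theorem prod_toWord (l : List (Σ i, M i)) (h : Red l) : (toWord l h).prod = P l := rfl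

/-- Uniqueness of reduced words -/
theorem red_unique {l₁ l₂ : List (Σ i, M i)} (h₁ : Red l₁) (h₂ : Red l₂)
    (h : P l₁ = P l₂) : l₁ = l₂ := by
  have e1 : Word.equiv (Word.prod (toWord l₁ h₁)) = toWord l₁ h₁ := Word.equiv.right_inv _
  have e2 : Word.equiv (Word.prod (toWord l₂ h₂)) = toWord l₂ h₂ := Word.equiv.right_inv _
  have : Word.prod (toWord l₁ h₁) = Word.prod (toWord l₂ h₂) := by
    rw [prod_toWord, prod_toWord, h]
  rw [this, e2] at e1
  exact (congrArg Word.toList e1).symm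

theorem exists_red (x : CoprodI M) : ∃ l, Red l ∧ P l = x := by
  refine ⟨(Word.equiv x).toList, ⟨(Word.equiv x).ne_one, (Word.equiv x).chain_ne⟩, ?_⟩
  have : P (Word.equiv x).toList = (Word.equiv x).prod := rfl
  rw [this]
  exact Word.equiv.left_inv x

theorem red_one {l : List (Σ i, M i)} (h : Red l) (hP : P l = 1) : l = [] :=
  red_unique h ⟨by simp, List.isChain_nil⟩ (by simpa using hP)

/-- inverse of a reduced list -/
def invL (l : List (Σ i, M i)) : List (Σ i, M i) :=
  (l.map fun p => (⟨p.1, p.2⁻¹⟩ : Σ i, M i)).reverse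

@[simp] theorem invL_nil : invL ([] : List (Σ i, M i)) = [] := rfl

@[simp] theorem invL_length (l : List (Σ i, M i)) : (invL l).length = l.length := by
  simp [invL]

theorem invL_cons (p : (Σ i, M i)) (l : List (Σ i, M i)) :
    invL (p :: l) = invL l ++ [⟨p.1, p.2⁻¹⟩] := by simp [invL]

theorem invL_append (l₁ l₂ : List (Σ i, M i)) :
    invL (l₁ ++ l₂) = invL l₂ ++ invL l₁ := by simp [invL]

theorem P_invL (l : List (Σ i, M i)) : P (invL l) = (P l)⁻¹ := by
  induction l with
  | nil => simp
  | cons p l ih => rw [invL_cons, P_append, P_cons, ih]; simp [mul_comm]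

theorem red_invL {l : List (Σ i, M i)} (h : Red l) : Red (invL l) := by
  constructor
  · intro p hp
    simp only [invL, List.mem_reverse, List.mem_map] at hp
    obtain ⟨q, hq, rfl⟩ := hp
    simpa using h.1 q hq
  · simp only [invL, List.Chain', List.isChain_reverse, List.isChain_map]
    exact List.IsChain.imp (fun a b hab => by simpa using Ne.symm hab) h.2

end ZpowersAux
namespace ZpowersAux

variable {ι : Type*} [DecidableEq ι] {M : ι → Type*} [∀ i, Group (M i)] [∀ i, DecidableEq (M i)]

theorem red_cons {p : (Σ i, M i)} {l : List (Σ i, M i)} :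
    Red (p :: l) ↔ p.2 ≠ 1 ∧ (∀ q ∈ l.head?, p.1 ≠ q.1) ∧ Red l := by
  simp only [Red, List.mem_cons, List.Chain', List.isChain_cons]
  constructor
  · rintro ⟨h1, h2, h3⟩
    exact ⟨h1 _ (Or.inl rfl), fun q hq => h2 q hq, fun q hq => h1 q (Or.inr hq), h3⟩
  · rintro ⟨h1, h2, h3, h4⟩
    exact ⟨fun q hq => hq.elim (fun e => e ▸ h1) (h3 q), h2, h4⟩

theorem red_append_iff {l₁ l₂ : List (Σ i, M i)} :
    Red (l₁ ++ l₂) ↔ Red l₁ ∧ Red l₂ ∧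
      ∀ p ∈ l₁.getLast?, ∀ q ∈ l₂.head?, p.1 ≠ q.1 := by
  simp only [Red, List.mem_append, List.Chain', List.isChain_append]
  constructor
  · rintro ⟨h1, h2, h3, h4⟩
    exact ⟨⟨fun p hp => h1 p (Or.inl hp), h2⟩, ⟨fun p hp => h1 p (Or.inr hp), h3⟩, h4⟩
  · rintro ⟨⟨a1, a2⟩, ⟨b1, b2⟩, hj⟩
    exact ⟨fun p hp => hp.elim (a1 p) (b1 p), a2, b2, hj⟩

section gp

variable (i j : ι) (a : M i) (b : M j)

/-- the reduced word of `(of a * of b) ^ n` -/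
def gp : ℕ → List (Σ i, M i)
  | 0 => []
  | n+1 => ⟨i, a⟩ :: ⟨j, b⟩ :: gp n

@[simp] theorem gp_zero : gp i j a b 0 = [] := rfl

theorem gp_succ (n : ℕ) : gp i j a b (n+1) = ⟨i, a⟩ :: ⟨j, b⟩ :: gp i j a b n := rfl

@[simp] theorem gp_length (n : ℕ) : (gp i j a b n).length = 2 * n := by
  induction n with
  | zero => rfl
  | succ n ih => simp [gp_succ, ih]; ring

@[simp] theorem P_gp (n : ℕ) : P (gp i j a b n) = (of a * of b) ^ n := by
  induction n with
  | zero => simp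
  | succ n ih => rw [gp_succ, P_cons, P_cons, ih, pow_succ']; group

variable {i j a b}

theorem gp_head? {n : ℕ} (hn : 0 < n) : (gp i j a b n).head? = some ⟨i, a⟩ := by
  cases n with
  | zero => omega
  | succ n => rfl

theorem gp_append_pair (n : ℕ) :
    gp i j a b (n + 1) = gp i j a b n ++ [⟨i, a⟩, ⟨j, b⟩] := by
  induction n with
  | zero => rfl
  | succ m ih =>
    conv_lhs => rw [gp_succ, ih]
    rw [gp_succ]
    simp

theorem gp_getLast? {n : ℕ} (hn : 0 < n) : (gp i j a b n).getLast? = some ⟨j, b⟩ := by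
  cases n with
  | zero => omega
  | succ m => rw [gp_append_pair]; simp

theorem red_gp (hij : i ≠ j) (ha : a ≠ 1) (hb : b ≠ 1) (n : ℕ) : Red (gp i j a b n) := by
  induction n with
  | zero => exact ⟨by simp, List.isChain_nil⟩
  | succ n ih =>
    rw [gp_succ, red_cons, red_cons]
    refine ⟨ha, by simp [hij], hb, ?_, ih⟩
    intro q hq
    cases n with
    | zero => simp at hq
    | succ m =>
      rw [gp_head? (by omega)] at hq
      simp at hq
      subst hq
      simpa using hij.symm

theorem red_gp_append (hij : i ≠ j) (ha : a ≠ 1) (hb : b ≠ 1) (n : ℕ)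
    {B : List (Σ i, M i)} (hB : Red B) (hhead : ∀ p ∈ B.head?, p.1 ≠ j) :
    Red (gp i j a b n ++ B) := by
  rw [red_append_iff]
  refine ⟨red_gp hij ha hb n, hB, ?_⟩
  intro p hp q hq
  cases n with
  | zero => simp at hp
  | succ m =>
    rw [gp_getLast? (by omega)] at hp
    simp at hp
    subst hp
    exact fun h => hhead q hq h.symm

theorem invL_gp (n : ℕ) : invL (gp j i b⁻¹ a⁻¹ n) = gp i j a b n := by
  induction n with
  | zero => rfl
  | succ m ih =>
    rw [gp_succ, invL_cons, invL_cons, ih, gp_append_pair]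
    simp

theorem gp_take_even {s n : ℕ} (h : s ≤ n) :
    (gp i j a b n).take (2 * s) = gp i j a b s := by
  induction s generalizing n with
  | zero => simp
  | succ t ih =>
    cases n with
    | zero => omega
    | succ m =>
      rw [gp_succ, gp_succ, show 2 * (t+1) = (2*t+1)+1 by ring]
      simp only [List.take_succ_cons]
      rw [ih (by omega)]

theorem gp_take_odd {s n : ℕ} (h : s < n) :
    (gp i j a b n).take (2 * s + 1) = gp i j a b s ++ [⟨i, a⟩] := by
  induction s generalizing n with
  | zero =>
    cases n with
    | zero => omega
    | succ m => simp [gp_succ]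
  | succ t ih =>
    cases n with
    | zero => omega
    | succ m =>
      rw [gp_succ, gp_succ, show 2 * (t+1) + 1 = (2*t+1)+1+1 by ring]
      simp only [List.take_succ_cons]
      rw [ih (by omega)]
      simp

theorem gp_drop_even {s n : ℕ} (h : s ≤ n) :
    (gp i j a b n).drop (2 * s) = gp i j a b (n - s) := by
  induction s generalizing n with
  | zero => simp
  | succ t ih =>
    cases n with
    | zero => omega
    | succ m =>
      rw [gp_succ, show 2 * (t+1) = (2*t+1)+1 by ring]
      simp only [List.drop_succ_cons]
      rw [ih (by omega)]
      congr 1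
      omega

theorem gp_drop_odd {s n : ℕ} (h : s < n) :
    (gp i j a b n).drop (2 * s + 1) = ⟨j, b⟩ :: gp i j a b (n - s - 1) := by
  induction s generalizing n with
  | zero =>
    cases n with
    | zero => omega
    | succ m => simp [gp_succ]
  | succ t ih =>
    cases n with
    | zero => omega
    | succ m =>
      rw [gp_succ, show 2 * (t+1) + 1 = (2*t+1)+1+1 by ring]
      simp only [List.drop_succ_cons]
      rw [ih (by omega)]
      congr 2
      omega

end gp

end ZpowersAux
namespace ZpowersAux

variable {ι : Type*} [DecidableEq ι] {M : ι → Type*} [∀ i, Group (M i)] [∀ i, DecidableEq (M i)]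

/-- Structure of the normal form of `(ab)^m * y`: a periodic prefix `gp K` followed by a
bounded remainder `B`. -/
theorem struct (i j : ι) (hij : i ≠ j) (a : M i) (b : M j) (ha : a ≠ 1) (hb : b ≠ 1)
    (ly : List (Σ i, M i)) (hly : Red ly) (m : ℕ) :
    ∃ K B, Red (gp i j a b K ++ B) ∧
      P (gp i j a b K ++ B) = (of a * of b) ^ m * P ly ∧
      (2*K + ly.length + 3 ≥ 2*m + B.length ∧
        (2*K + ly.length ≥ 2*m + B.length ∨ 0 < K ∨ ∃ a' : M i, ∃ t', B = ⟨i, a'⟩ :: t')) ∧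
      2*K + B.length ≤ 2*m + ly.length := by
  induction m with
  | zero =>
    exact ⟨0, ly, by simpa using hly, by simp, ⟨by omega, Or.inl (by omega)⟩, by omega⟩
  | succ m ih =>
    obtain ⟨K, B, hred, hP, ⟨hweak, hbr⟩, hlen⟩ := ih
    have hg : ((of a * of b : CoprodI M)) ^ (m+1) * P ly
        = (of a * of b) * ((of a * of b) ^ m * P ly) := by
      rw [pow_succ', mul_assoc]
    rw [hg, ← hP]
    clear hg hP
    match K, hbr with
    | (K+1), _ =>
      refine ⟨K+2, B, ?_, ?_, ⟨by omega, Or.inr (Or.inl (by omega))⟩, by omega⟩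
      · rw [red_append_iff] at hred ⊢
        refine ⟨red_gp hij ha hb _, hred.2.1, ?_⟩
        rw [gp_getLast? (by omega : 0 < K + 2)]
        have := hred.2.2
        rw [gp_getLast? (by omega : 0 < K + 1)] at this
        exact this
      · simp only [P_append, P_gp]
        rw [pow_succ']
        group
    | 0, hbr =>
      simp only [gp_zero, List.nil_append] at hred
      have hbr' : 2*0 + ly.length ≥ 2*m + B.length ∨ ∃ a' : M i, ∃ t', B = ⟨i, a'⟩ :: t' := by
        rcases hbr with h | h | h
        · exact Or.inl h
        · omega
        · exact Or.inr h
      clear hbr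
      match B, hred, hbr', hweak, hlen with
      | [], _, _, hweak, hlen =>
        refine ⟨1, [], ?_, ?_, ⟨?_, Or.inr (Or.inl one_pos)⟩, ?_⟩
        · simpa using red_gp hij ha hb 1
        · simp [gp_succ]
        · simp only [List.length_nil] at hweak ⊢; omega
        · simp only [List.length_nil] at hlen ⊢; omega
      | (⟨k, d⟩ :: t), hred, hbr', hweak, hlen =>
        by_cases hk : j = k
        · subst hk
          have hd : d ≠ 1 := (red_cons.1 hred).1
          have hth : ∀ q ∈ t.head?, j ≠ q.1 := (red_cons.1 hred).2.1
          have ht : Red t := (red_cons.1 hred).2.2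
          have hbr2 : ly.length ≥ 2*m + t.length + 1 := by
            rcases hbr' with h | ⟨a', t', he⟩
            · simp at h; omega
            · exact absurd (congrArg Sigma.fst (List.head_eq_of_cons_eq he)) (Ne.symm hij)
          by_cases hbd : b * d = 1
          · -- cancellation of b with d
            match t, hth, ht, hbr2 with
            | [], _, _, hbr2 =>
              refine ⟨0, [⟨i, a⟩], ?_, ?_, ⟨?_, Or.inr (Or.inr ⟨a, [], rfl⟩)⟩, ?_⟩
              · exact red_cons.2 ⟨ha, by simp, ⟨by simp, List.isChain_nil⟩⟩
              · simp only [gp_zero, List.nil_append, P_cons, P_nil, mul_one]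
                rw [mul_assoc, ← map_mul, hbd, map_one, mul_one]
              · simp only [List.length_cons, List.length_nil] at hbr2 ⊢; omega
              · simp only [List.length_cons, List.length_nil] at hbr2 ⊢; omega
            | (⟨k₂, e⟩ :: t₂), hth, ht, hbr2 =>
              have hk₂j : j ≠ k₂ := hth _ rfl
              have he1 : e ≠ 1 := (red_cons.1 ht).1
              have ht₂h : ∀ q ∈ t₂.head?, k₂ ≠ q.1 := (red_cons.1 ht).2.1
              have ht₂ : Red t₂ := (red_cons.1 ht).2.2
              by_cases hk₂ : i = k₂
              · subst hk₂
                by_cases hae : a * e = 1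
                · -- double cancellation
                  refine ⟨0, t₂, ht₂, ?_, ⟨?_, Or.inl ?_⟩, ?_⟩
                  · simp only [gp_zero, List.nil_append, P_cons]
                    rw [show (of a * of b) * (of d * (of e * P t₂))
                        = (of a * ((of b * of d) * of e)) * P t₂ by group,
                      ← map_mul, hbd, map_one, one_mul, ← map_mul, hae, map_one, one_mul]
                  · simp only [List.length_cons] at hbr2 ⊢; omega
                  · simp only [List.length_cons] at hbr2 ⊢; omega
                  · simp only [List.length_cons] at hbr2 ⊢; omega
                · -- cancellation then merge
                  refine ⟨0, ⟨i, a*e⟩ :: t₂, ?_, ?_, ⟨?_, Or.inr (Or.inr ⟨a*e, t₂, rfl⟩)⟩, ?_⟩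
                  · exact red_cons.2 ⟨hae, ht₂h, ht₂⟩
                  · simp only [gp_zero, List.nil_append, P_cons]
                    rw [show (of a * of b) * (of d * (of e * P t₂))
                        = (of a * ((of b * of d) * of e)) * P t₂ by group,
                      ← map_mul, hbd, map_one, one_mul, ← map_mul]
                  · simp only [List.length_cons] at hbr2 ⊢; omega
                  · simp only [List.length_cons] at hbr2 ⊢; omega
              · -- cancellation then no merge
                refine ⟨0, ⟨i, a⟩ :: ⟨k₂, e⟩ :: t₂, ?_,  ?_,
                  ⟨?_, Or.inr (Or.inr ⟨a, _, rfl⟩)⟩, ?_⟩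
                · exact red_cons.2 ⟨ha, by simpa using hk₂,
                    red_cons.2 ⟨he1, ht₂h, ht₂⟩⟩
                · simp only [gp_zero, List.nil_append, P_cons]
                  rw [show (of a * of b) * (of d * (of e * P t₂))
                      = (of a * ((of b * of d) * (of e * P t₂))) by group,
                    ← map_mul, hbd, map_one, one_mul]
                · simp only [List.length_cons] at hbr2 ⊢; omega
                · simp only [List.length_cons] at hbr2 ⊢; omega
          · -- merge of b with d
            refine ⟨0, ⟨i, a⟩ :: ⟨j, b*d⟩ :: t, ?_, ?_,
              ⟨?_, Or.inr (Or.inr ⟨a, _, rfl⟩)⟩, ?_⟩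
            · exact red_cons.2 ⟨ha, by simpa using hij,
                red_cons.2 ⟨hbd, hth, ht⟩⟩
            · simp only [gp_zero, List.nil_append, P_cons]
              rw [map_mul]
              group
            · simp only [List.length_cons] at hbr2 ⊢; omega
            · simp only [List.length_cons] at hbr2 ⊢; omega
        · -- no interaction
          refine ⟨1, ⟨k, d⟩ :: t, ?_, ?_, ⟨?_, Or.inr (Or.inl one_pos)⟩, ?_⟩
          · exact red_gp_append hij ha hb 1 hred (by simpa using fun h => hk h.symm)
          · simp only [gp_succ, gp_zero, P_append, P_cons, P_nil, List.nil_append]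
            group
          · simp only [List.length_cons] at hweak ⊢; omega
          · simp only [List.length_cons] at hlen ⊢; omega

end ZpowersAux
namespace ZpowersAux

variable {ι : Type*} [DecidableEq ι] {M : ι → Type*} [∀ i, Group (M i)] [∀ i, DecidableEq (M i)]

theorem sigma_eq_same {i : ι} {x y : M i} (h : (⟨i, x⟩ : Σ i, M i) = ⟨i, y⟩) : x = y := by
  simpa using h

theorem head?_gp_append {i j : ι} {a : M i} {b : M j} {n : ℕ} (hn : 0 < n)
    (B : List (Σ i, M i)) : (gp i j a b n ++ B).head? = some ⟨i, a⟩ := by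
  cases n with
  | zero => omega
  | succ t => rw [gp_succ]; rfl

theorem red_gp_concat {i j : ι} {a : M i} {b : M j} (hij : i ≠ j) (ha : a ≠ 1) (hb : b ≠ 1)
    {c : M i} (hc : c ≠ 1) (n : ℕ) : Red (gp i j a b n ++ [⟨i, c⟩]) := by
  rw [red_append_iff]
  refine ⟨red_gp hij ha hb n, ⟨by simpa using hc, List.isChain_singleton _⟩, ?_⟩
  intro p hp q hq
  cases n with
  | zero => simp at hp
  | succ t =>
    rw [gp_getLast? (Nat.succ_pos t)] at hp
    simp at hp hq
    subst hp
    rw [← hq]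
    exact hij.symm

theorem head_fst_gp_concat {i j : ι} {a : M i} {b : M j} {c : M i} (n : ℕ) :
    ∀ q ∈ (gp i j a b n ++ [(⟨i, c⟩ : Σ i, M i)]).head?, q.1 = i := by
  intro q hq
  have h : (gp i j a b n ++ [(⟨i, c⟩ : Σ i, M i)]).head? = some q := hq
  cases n with
  | zero =>
    simp only [gp_zero, List.nil_append, List.head?_cons] at h
    have h2 := Option.some.inj h
    subst h2
    rfl
  | succ t =>
    rw [gp_succ, List.cons_append, List.head?_cons] at h
    have h2 := Option.some.inj h
    subst h2
    rfl

theorem main_pos (i j : ι) (hij : i ≠ j) (a : M i) (b : M j) (ha : a ≠ 1) (hb : b ≠ 1)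
    (h2 : a * a ≠ 1 ∨ b * b ≠ 1) (x : CoprodI M) (n m : ℤ) (hn : 0 < n)
    (hE : x * (of a * of b) ^ n * x⁻¹ = (of a * of b) ^ m) :
    x ∈ Subgroup.zpowers (of a * of b) := by
  set g : CoprodI M := of a * of b with hg
  have hgi : (of b⁻¹ * of a⁻¹ : CoprodI M) = g⁻¹ := by
    rw [map_inv, map_inv, hg, mul_inv_rev]
  -- basic data
  obtain ⟨lx, hlx, hlxP⟩ := exists_red x
  obtain ⟨lxi, hlxi, hlxiP⟩ := exists_red x⁻¹
  set l : ℕ := lx.length with hl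
  set l' : ℕ := lxi.length with hl'
  set k : ℕ := l + l' + 20 with hk
  obtain ⟨nn, hnnz, hnn1⟩ : ∃ nn : ℕ, ((nn : ℕ) : ℤ) = n ∧ 1 ≤ nn :=
    ⟨n.toNat, Int.toNat_of_nonneg hn.le, by omega⟩
  obtain ⟨N, hNk, hNz⟩ : ∃ N : ℕ, k ≤ N ∧ ((N : ℕ) : ℤ) = (k : ℤ) * n :=
    ⟨k * nn, Nat.le_mul_of_pos_right k (by omega), by push_cast; rw [hnnz]⟩
  -- exclude m = 0
  have hm0 : m ≠ 0 := by
    intro h0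
    subst h0
    rw [zpow_zero] at hE
    have hgn : g ^ n = 1 := by
      calc g ^ n = x⁻¹ * (x * g ^ n * x⁻¹) * x := by group
      _ = 1 := by rw [hE]; group
    have hgnn : P (gp i j a b nn) = 1 := by
      rw [P_gp, ← hg, ← zpow_natCast g nn, hnnz, hgn]
    have := red_one (red_gp hij ha hb nn) hgnn
    have := congrArg List.length this
    simp at this
    omega
  -- amplified equation
  have hEk : x * g ^ (N : ℕ) * x⁻¹ = g ^ ((k:ℤ) * m) := by
    have : x * g ^ ((k:ℤ) * n) * x⁻¹ = g ^ ((k:ℤ) * m) := by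
      rw [mul_comm (k:ℤ) n, zpow_mul, mul_comm (k:ℤ) m, zpow_mul]
      calc x * (g ^ n) ^ (k:ℤ) * x⁻¹ = (MulAut.conj x) ((g ^ n) ^ (k:ℤ)) := by
            rw [MulAut.conj_apply]
      _ = ((MulAut.conj x) (g ^ n)) ^ (k:ℤ) := map_zpow _ _ _
      _ = (g ^ m) ^ (k:ℤ) := by rw [MulAut.conj_apply, hE]
    rw [← this, ← zpow_natCast g N, hNz]
  -- left structure for x⁻¹ with negative powers
  obtain ⟨K, B, hredKB, hPKB, ⟨hw, _⟩, hlen⟩ :=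
    struct j i hij.symm b⁻¹ a⁻¹ (inv_ne_one.2 hb) (inv_ne_one.2 ha) lxi hlxi N
  have hB2 : 2 * B.length ≤ 2 * l' + 3 := by omega
  have hK2 : 2 * K + l' + 3 ≥ 2 * N := by omega
  rw [hgi, hlxiP] at hPKB
  -- word for x * g^N
  have hredL : Red (invL B ++ gp i j a b K) := by
    have h0 := red_invL hredKB
    rwa [invL_append, invL_gp] at h0
  have hPL : P (invL B ++ gp i j a b K) = x * g ^ (N : ℕ) := by
    have h1 : P (invL (gp j i b⁻¹ a⁻¹ K ++ B)) = (P (gp j i b⁻¹ a⁻¹ K ++ B))⁻¹ := P_invL _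
    rw [invL_append, invL_gp] at h1
    rw [h1, hPKB]
    group
  set p : ℕ := (invL B).length with hp
  have hpB : p = B.length := by rw [hp, invL_length]
  -- sign cases on m
  rcases lt_trichotomy m 0 with hmneg | hmz | hmpos
  · -- m < 0 : contradiction
    exfalso
    obtain ⟨mm, hmmz, hmm1⟩ : ∃ mm : ℕ, ((mm : ℕ) : ℤ) = -m ∧ 1 ≤ mm :=
      ⟨(-m).toNat, Int.toNat_of_nonneg (by omega), by omega⟩
    obtain ⟨M'', hM''k, hM''z⟩ : ∃ M'' : ℕ, k ≤ M'' ∧ ((M'' : ℕ) : ℤ) = -((k : ℤ) * m) :=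
      ⟨k * mm, Nat.le_mul_of_pos_right k (by omega), by push_cast; rw [hmmz]; ring⟩
    have hgm : g ^ ((k:ℤ) * m) = (g⁻¹) ^ (M'' : ℕ) := by
      rw [inv_pow, ← zpow_natCast g M'', ← zpow_neg]
      congr 1
      omega
    obtain ⟨K', B₂, hred2, hP2, ⟨hw2, _⟩, hlen2⟩ :=
      struct j i hij.symm b⁻¹ a⁻¹ (inv_ne_one.2 hb) (inv_ne_one.2 ha) lx hlx M''
    rw [hgi, hlxP] at hP2
    have hLL : invL B ++ gp i j a b K = gp j i b⁻¹ a⁻¹ K' ++ B₂ := by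
      refine red_unique hredL hred2 ?_
      rw [hPL, hP2, ← hgm, ← hEk]
      group
    have hK'big : 2 * K' + l + 3 ≥ 2 * M'' := by omega
    have hple : p + 4 ≤ 2 * K' := by omega
    have hdrop := congrArg (List.drop p) hLL
    rw [hp, List.drop_left] at hdrop
    rw [← hp, List.drop_append_of_le_length (by rw [gp_length]; omega)] at hdrop
    have hKpos : 0 < K := by omega
    rcases Nat.even_or_odd p with ⟨s, hs⟩ | ⟨s, hs⟩
    · -- even: index clash i = j
      rw [show p = 2 * s by omega, gp_drop_even (by omega : s ≤ K')] at hdrop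
      have h1 := congrArg List.head? hdrop
      rw [gp_head? hKpos, head?_gp_append (by omega : 0 < K' - s)] at h1
      exact hij (congrArg Sigma.fst (Option.some.inj h1))
    · -- odd: a and b both of order 2
      rw [show p = 2 * s + 1 by omega, gp_drop_odd (by omega : s < K')] at hdrop
      obtain ⟨K₀, rfl⟩ : ∃ K₀, K = K₀ + 1 := ⟨K - 1, by omega⟩
      rw [gp_succ, List.cons_append] at hdrop
      have h1 := List.head_eq_of_cons_eq hdrop
      have h2' := List.tail_eq_of_cons_eq hdrop
      have haa : a * a = 1 := by
        have := sigma_eq_same h1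
        rw [mul_eq_one_iff_eq_inv]
        exact this
      have h3 := congrArg List.head? h2'
      rw [head?_gp_append (by omega : 0 < K' - s - 1)] at h3
      simp only [List.head?_cons] at h3
      have hbb : b * b = 1 := by
        have := sigma_eq_same (Option.some.inj h3)
        rw [mul_eq_one_iff_eq_inv]
        exact this
      rcases h2 with h | h
      · exact h haa
      · exact h hbb
  · exact absurd hmz hm0
  · -- m > 0 : conclude or reduce to single letter
    obtain ⟨mm, hmmz, hmm1⟩ : ∃ mm : ℕ, ((mm : ℕ) : ℤ) = m ∧ 1 ≤ mm :=
      ⟨m.toNat, Int.toNat_of_nonneg hmpos.le, by omega⟩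
    obtain ⟨M', hM'k, hM'z⟩ : ∃ M' : ℕ, k ≤ M' ∧ ((M' : ℕ) : ℤ) = (k : ℤ) * m :=
      ⟨k * mm, Nat.le_mul_of_pos_right k (by omega), by push_cast; rw [hmmz]⟩
    have hgm : g ^ ((k:ℤ) * m) = g ^ (M' : ℕ) := by
      rw [← zpow_natCast g M', hM'z]
    obtain ⟨K', B₂, hred2, hP2, ⟨hw2, _⟩, hlen2⟩ :=
      struct i j hij a b ha hb lx hlx M'
    rw [← hg, hlxP] at hP2
    have hLL : invL B ++ gp i j a b K = gp i j a b K' ++ B₂ := by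
      refine red_unique hredL hred2 ?_
      rw [hPL, hP2, ← hgm, ← hEk]
      group
    have hK'big : 2 * K' + l + 3 ≥ 2 * M' := by omega
    have hple : p + 4 ≤ 2 * K' := by omega
    have htake := congrArg (List.take p) hLL
    rw [hp, List.take_left] at htake
    rw [← hp, List.take_append_of_le_length (by rw [gp_length]; omega)] at htake
    rcases Nat.even_or_odd p with ⟨s, hs⟩ | ⟨s, hs⟩
    · -- even: x is a power of g
      rw [show p = 2 * s by omega, gp_take_even (by omega : s ≤ K')] at htake
      have hBp : P B = (g ^ (s : ℕ))⁻¹ := by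
        have hcc := congrArg P htake
        rw [P_invL, P_gp, ← hg] at hcc
        rw [← inv_inv (P B), hcc]
      have e : (g⁻¹) ^ (K : ℕ) * (g ^ (s:ℕ))⁻¹ = (g⁻¹) ^ (N : ℕ) * x⁻¹ := by
        rw [← hBp]
        have := hPKB
        rw [P_append, P_gp, hgi] at this
        exact this
      refine Subgroup.mem_zpowers_iff.2 ⟨(K:ℤ) + s - N, ?_⟩
      have hx : x⁻¹ = ((g⁻¹) ^ (N:ℕ))⁻¹ * ((g⁻¹) ^ (K:ℕ) * (g ^ (s:ℕ))⁻¹) := by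
        rw [e]; group
      have hxx : x = (((g⁻¹) ^ (N:ℕ))⁻¹ * ((g⁻¹) ^ (K:ℕ) * (g ^ (s:ℕ))⁻¹))⁻¹ := by
        rw [← hx, inv_inv]
      rw [hxx]
      group
    · -- odd: x = g^s * (of a) * g^(K-N), reduce to single letter equation
      exfalso
      rw [show p = 2 * s + 1 by omega, gp_take_odd (by omega : s < K')] at htake
      have hBp : P B = (g ^ (s:ℕ) * of a)⁻¹ := by
        have hcc := congrArg P htake
        rw [P_invL, P_append, P_gp, ← hg] at hcc
        simp only [P_cons, P_nil, mul_one] at hcc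
        rw [← inv_inv (P B), hcc]
      have e : (g⁻¹) ^ (K : ℕ) * (g ^ (s:ℕ) * of a)⁻¹ = (g⁻¹) ^ (N : ℕ) * x⁻¹ := by
        rw [← hBp]
        have := hPKB
        rw [P_append, P_gp, hgi] at this
        exact this
      have hxval : x = g ^ (s:ℤ) * of a * g ^ ((K:ℤ) - N) := by
        have hx : x⁻¹ = ((g⁻¹) ^ (N:ℕ))⁻¹ * ((g⁻¹) ^ (K:ℕ) * (g ^ (s:ℕ) * of a)⁻¹) := by
          rw [e]; group
        have hxx : x = (((g⁻¹) ^ (N:ℕ))⁻¹ * ((g⁻¹) ^ (K:ℕ) * (g ^ (s:ℕ) * of a)⁻¹))⁻¹ := by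
          rw [← hx, inv_inv]
        rw [hxx]
        group
      -- single letter equation
      have hE2 : of a * g ^ n * (of a)⁻¹ = g ^ m := by
        have key : of a * g ^ n * (of a)⁻¹
            = g ^ (-(s:ℤ)) * ((g ^ (s:ℤ) * of a * g ^ ((K:ℤ) - N)) * g ^ n *
              (g ^ (s:ℤ) * of a * g ^ ((K:ℤ) - N))⁻¹) * g ^ (s:ℤ) := by
          group
        rw [key, ← hxval, hE]
        group
      have hE2' : of a * g ^ (nn : ℕ) * (of a)⁻¹ = g ^ (mm : ℕ) := by
        rw [← zpow_natCast g nn, ← zpow_natCast g mm, hnnz, hmmz]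
        exact hE2
      obtain ⟨n', rfl⟩ : ∃ n', nn = n' + 1 := ⟨nn - 1, by omega⟩
      have hb' : (of b : CoprodI M) = (of a)⁻¹ * g := by rw [hg]; group
      by_cases haa : a * a = 1
      · -- L2 = b :: gp n' ++ [a], head index contradiction
        have hainv : (of a : CoprodI M)⁻¹ = of a := by
          rw [← map_inv]
          exact congrArg of (inv_eq_of_mul_eq_one_right haa)
        have hof1 : (of a : CoprodI M) * of a = 1 := by
          rw [← map_mul, haa, map_one]
        have hredL2 : Red (⟨j, b⟩ :: (gp i j a b n' ++ [⟨i, a⟩])) := by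
          refine red_cons.2 ⟨hb, ?_, red_gp_concat hij ha hb ha n'⟩
          intro q hq
          rw [head_fst_gp_concat n' q hq]
          exact hij.symm
        have hPL2 : P (⟨j, b⟩ :: (gp i j a b n' ++ [⟨i, a⟩]))
            = of a * g ^ (n' + 1 : ℕ) * (of a)⁻¹ := by
          simp only [P_cons, P_append, P_gp, P_nil, mul_one, ← hg]
          rw [pow_succ', hb', hainv]
          group
        have hun := red_unique hredL2 (red_gp hij ha hb mm)
          (by rw [hPL2, hE2', P_gp, hg])
        obtain ⟨m', rfl⟩ : ∃ m', mm = m' + 1 := ⟨mm - 1, by omega⟩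
        have hh := congrArg List.head? hun
        rw [gp_succ] at hh
        simp only [List.head?_cons] at hh
        exact hij (congrArg Sigma.fst (Option.some.inj hh)).symm
      · -- L1, length parity contradiction
        have hredL1 : Red (⟨i, a*a⟩ :: ⟨j, b⟩ :: (gp i j a b n' ++ [⟨i, a⁻¹⟩])) := by
          refine red_cons.2 ⟨haa, by simp [hij], red_cons.2 ⟨hb, ?_, red_gp_concat hij ha hb (inv_ne_one.2 ha) n'⟩⟩
          intro q hq
          rw [head_fst_gp_concat n' q hq]
          exact hij.symm
        have hPL1 : P (⟨i, a*a⟩ :: ⟨j, b⟩ :: (gp i j a b n' ++ [⟨i, a⁻¹⟩]))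
            = of a * g ^ (n' + 1 : ℕ) * (of a)⁻¹ := by
          simp only [P_cons, P_append, P_gp, P_nil, mul_one, map_mul, map_inv, ← hg]
          rw [pow_succ', hb']
          group
        have hun := red_unique hredL1 (red_gp hij ha hb mm) (by rw [hPL1, hE2', P_gp, hg])
        have := congrArg List.length hun
        simp at this
        omega
end ZpowersAux
namespace ZpowersAux

variable {ι : Type*} [DecidableEq ι] {M : ι → Type*} [∀ i, Group (M i)] [∀ i, DecidableEq (M i)]

theorem main (i j : ι) (hij : i ≠ j) (a : M i) (b : M j) (ha : a ≠ 1) (hb : b ≠ 1)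
    (h2 : a * a ≠ 1 ∨ b * b ≠ 1) (x : CoprodI M) (n m : ℤ) (hn : n ≠ 0)
    (hE : x * (of a * of b) ^ n * x⁻¹ = (of a * of b) ^ m) :
    x ∈ Subgroup.zpowers (of a * of b) := by
  rcases hn.lt_or_gt with h | h
  · apply main_pos i j hij a b ha hb h2 x (-n) (-m) (by omega)
    rw [zpow_neg, zpow_neg, ← hE]
    group
  · exact main_pos i j hij a b ha hb h2 x n m h hE

section Transfer

universe u v

variable (A : Type u) (B : Type v) [Group A] [Group B]

/-- The two-element family of groups `A`, `B` indexed by `Bool`. -/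
def Fam : Bool → Type (max u v) := fun t => Bool.rec (ULift.{u} B) (ULift.{v} A) t

instance : ∀ t, Group (Fam A B t) := fun t =>
  Bool.rec (inferInstanceAs (Group (ULift.{u} B))) (inferInstanceAs (Group (ULift.{v} A))) t

/-- The canonical homomorphism from the binary coproduct to the indexed coproduct. -/
noncomputable def phi : Coprod A B →* CoprodI (Fam A B) :=
  Coprod.lift
    ((CoprodI.of (M := Fam A B) (i := true)).comp
      ((MulEquiv.ulift.symm : A ≃* ULift.{v} A)).toMonoidHom)
    ((CoprodI.of (M := Fam A B) (i := false)).comp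
      ((MulEquiv.ulift.symm : B ≃* ULift.{u} B)).toMonoidHom)

/-- A left inverse of `phi`. -/
noncomputable def psi : CoprodI (Fam A B) →* Coprod A B :=
  CoprodI.lift (fun t => Bool.rec
    ((Coprod.inr : B →* Coprod A B).comp (MulEquiv.ulift.toMonoidHom))
    ((Coprod.inl : A →* Coprod A B).comp (MulEquiv.ulift.toMonoidHom)) t)

theorem psi_phi (w : Coprod A B) : psi A B (phi A B w) = w := by
  have : (psi A B).comp (phi A B) = MonoidHom.id _ := by
    apply Coprod.hom_ext
    · ext x
      simp only [phi, psi, MonoidHom.comp_apply, Coprod.lift_apply_inl, CoprodI.lift_of,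
        MonoidHom.id_apply]
      exact congrArg Coprod.inl (MulEquiv.apply_symm_apply (MulEquiv.ulift.{u,v}) x)
    · ext x
      simp only [phi, psi, MonoidHom.comp_apply, Coprod.lift_apply_inr, CoprodI.lift_of,
        MonoidHom.id_apply]
      exact congrArg Coprod.inr (MulEquiv.apply_symm_apply (MulEquiv.ulift.{v,u}) x)
  exact DFunLike.congr_fun this w

theorem phi_injective : Function.Injective (phi A B) := by
  intro u v h
  have := congrArg (psi A B) h
  rwa [psi_phi, psi_phi] at this

theorem phi_inl (x : A) : phi A B (Coprod.inl x) = CoprodI.of (M := Fam A B) (i := true) ⟨x⟩ := by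
  simp [phi, Coprod.lift_apply_inl]
  rfl

theorem phi_inr (x : B) : phi A B (Coprod.inr x) = CoprodI.of (M := Fam A B) (i := false) ⟨x⟩ := by
  simp [phi, Coprod.lift_apply_inr]
  rfl

end Transfer

end ZpowersAux
open Monoid

/-- A subgroup `H` of a group `G` is conjugate separated if for every `x ∈ G \ H` the
intersection `H ∩ xHx⁻¹` is finite. -/
def ConjugateSeparated {G : Type*} [Group G] (H : Subgroup G) : Prop :=
  ∀ x : G, x ∉ H → ((H ⊓ H.map (MulAut.conj x).toMonoidHom : Subgroup G) : Set G).Finite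

/-- Let `A`, `B` be groups with non-trivial elements `a ∈ A`, `b ∈ B` such that `a` does not
have order 2 or `b` does not have order 2.  Then for any `x` in the free product `A ∗ B` not
lying in `⟨ab⟩`, one has `⟨ab⟩ ∩ x⟨ab⟩x⁻¹ = {e}`; in particular `⟨ab⟩` is conjugate
separated in `A ∗ B`. -/
theorem zpowers_ab_conjugate_separated
    (A B : Type*) [Group A] [Group B] (a : A) (b : B) (ha : a ≠ 1) (hb : b ≠ 1)
    (h2 : orderOf a ≠ 2 ∨ orderOf b ≠ 2) :
    (∀ x : Coprod A B,
        x ∉ Subgroup.zpowers (Coprod.inl a * Coprod.inr b) →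
        Subgroup.zpowers (Coprod.inl a * Coprod.inr b) ⊓
            (Subgroup.zpowers (Coprod.inl a * Coprod.inr b)).map
              (MulAut.conj x).toMonoidHom = ⊥) ∧
    ConjugateSeparated (Subgroup.zpowers (Coprod.inl a * Coprod.inr b)) := by
  classical
  letI : ∀ t, DecidableEq (ZpowersAux.Fam A B t) := fun t => Classical.decEq _
  set w : Coprod A B := Coprod.inl a * Coprod.inr b with hw
  set a' : ZpowersAux.Fam A B true := ⟨a⟩ with ha'def
  set b' : ZpowersAux.Fam A B false := ⟨b⟩ with hb'def
  have ha' : a' ≠ 1 := fun h => ha (congrArg ULift.down h)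
  have hb' : b' ≠ 1 := fun h => hb (congrArg ULift.down h)
  have h2' : a' * a' ≠ 1 ∨ b' * b' ≠ 1 := by
    rcases h2 with h | h
    · exact Or.inl fun hc =>
        h (orderOf_eq_prime (by rw [pow_two]; exact (congrArg ULift.down hc : a * a = 1)) ha)
    · exact Or.inr fun hc =>
        h (orderOf_eq_prime (by rw [pow_two]; exact (congrArg ULift.down hc : b * b = 1)) hb)
  have hφw : ZpowersAux.phi A B w = CoprodI.of a' * CoprodI.of b' := by
    rw [hw, map_mul, ZpowersAux.phi_inl, ZpowersAux.phi_inr]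
  have key : ∀ x : Coprod A B, x ∉ Subgroup.zpowers w →
      Subgroup.zpowers w ⊓ (Subgroup.zpowers w).map (MulAut.conj x).toMonoidHom = ⊥ := by
    intro x hx
    rw [eq_bot_iff]
    intro y hy
    rw [Subgroup.mem_inf] at hy
    obtain ⟨hy1, hy2⟩ := hy
    obtain ⟨mz, hmz⟩ := Subgroup.mem_zpowers_iff.1 hy1
    rw [Subgroup.mem_map] at hy2
    obtain ⟨h, hh, hconj⟩ := hy2
    obtain ⟨nz, hnz⟩ := Subgroup.mem_zpowers_iff.1 hh
    have hconj' : x * h * x⁻¹ = y := by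
      rw [← hconj]
      simp [MulAut.conj_apply]
    rcases eq_or_ne nz 0 with h0 | h0
    · subst h0
      rw [zpow_zero] at hnz
      rw [Subgroup.mem_bot, ← hconj', ← hnz]
      group
    · exfalso
      apply hx
      have hEq : (ZpowersAux.phi A B x) * (CoprodI.of a' * CoprodI.of b') ^ nz *
          (ZpowersAux.phi A B x)⁻¹ = (CoprodI.of a' * CoprodI.of b') ^ mz := by
        rw [← hφw, ← map_zpow, ← map_zpow, ← map_inv, ← map_mul, ← map_mul]
        exact congrArg _ (by rw [hnz, hconj', ← hmz])
      have hmem := @ZpowersAux.main Bool instDecidableEqBool (ZpowersAux.Fam A B) _ this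
        true false (fun h => Bool.noConfusion h) a' b' ha' hb' h2'
        (ZpowersAux.phi A B x) nz mz h0 hEq
      obtain ⟨t, ht⟩ := Subgroup.mem_zpowers_iff.1 hmem
      refine Subgroup.mem_zpowers_iff.2 ⟨t, ?_⟩
      apply ZpowersAux.phi_injective A B
      rw [map_zpow, hφw, ht]
  refine ⟨key, ?_⟩
  intro x hx
  rw [key x hx, Subgroup.coe_bot]
  exact Set.finite_singleton 1
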